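/- Let p ≥ 1, let x₁, …, x_p ∈ ℝ be fixed context points, and let α < 0. Then the single-head softmax attention output satisfies A_α(x) → max_{1 ≤ j ≤ p} x_j as x → −∞. -/

import Mathlib

open Filter Real

/-- Denominator of the softmax attention: `D_α(x) = exp(α x²) + ∑ₖ exp(α x xₖ)`. -/
noncomputable def attnDenom (p : ℕ) (xs : Fin p → ℝ) (α : ℝ) (x : ℝ) : ℝ :=
  Real.exp (α * x ^ 2) + ∑ k, Real.exp (α * x * xs k)

/-- Single-head softmax attention output
`A_α(x) = (∑ⱼ xⱼ exp(α x xⱼ) + x exp(α x²)) / D_α(x)`. -/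
noncomputable def attnOut (p : ℕ) (xs : Fin p → ℝ) (α : ℝ) (x : ℝ) : ℝ :=
  (∑ j, xs j * Real.exp (α * x * xs j) + x * Real.exp (α * x ^ 2)) / attnDenom p xs α x

theorem stmt_5 (p : ℕ) (hp : 1 ≤ p) (xs : Fin p → ℝ) (α : ℝ) (hα : α < 0) :
    Filter.Tendsto (fun x : ℝ => attnOut p xs α x) Filter.atBot
      (nhds (Finset.univ.sup' ⟨⟨0, hp⟩, Finset.mem_univ _⟩ xs)) := by
  have hne : (Finset.univ : Finset (Fin p)).Nonempty := ⟨⟨0, hp⟩, Finset.mem_univ _⟩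
  set M := Finset.univ.sup' (⟨⟨0, hp⟩, Finset.mem_univ _⟩ : (Finset.univ : Finset (Fin p)).Nonempty) xs with hM
  set Nf : ℝ → ℝ := fun x => (∑ j, xs j * Real.exp (α * x * (xs j - M))) + x * Real.exp (α * x * (x - M)) with hNf
  set Df : ℝ → ℝ := fun x => Real.exp (α * x * (x - M)) + ∑ j, Real.exp (α * x * (xs j - M)) with hDf
  set L : ℝ := ∑ j, (if xs j = M then (1:ℝ) else 0) with hL
  have hLpos : 0 < L := by
    obtain ⟨j, -, hj⟩ := Finset.exists_mem_eq_sup' hne xs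
    rw [hL]
    apply Finset.sum_pos'
    · intro i _; split_ifs <;> norm_num
    · exact ⟨j, Finset.mem_univ j, by rw [if_pos (show xs j = M from hj.symm)]; norm_num⟩
  -- eventual bound on the quadratic exponent
  have hev : ∀ᶠ x : ℝ in atBot, α * x * (x - M) ≤ x := by
    filter_upwards [eventually_le_atBot (min (M + 1/α) 0)] with x hx
    have hx1 : x ≤ M + 1/α := le_trans hx (min_le_left _ _)
    have hx0 : x ≤ 0 := le_trans hx (min_le_right _ _)
    have h1 : α * (M + 1/α) ≤ α * x := mul_le_mul_of_nonpos_left hx1 hα.le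
    have h2 : α * (M + 1/α) = α * M + 1 := by
      rw [mul_add, mul_one_div, div_self hα.ne]
    nlinarith
  have hquad : Tendsto (fun x : ℝ => α * x * (x - M)) atBot atBot :=
    tendsto_atBot_mono' atBot hev tendsto_id
  have hqexp : Tendsto (fun x : ℝ => Real.exp (α * x * (x - M))) atBot (nhds 0) :=
    Real.tendsto_exp_atBot.comp hquad
  -- x * exp(quadratic) → 0
  have hxq : Tendsto (fun x : ℝ => x * Real.exp (α * x * (x - M))) atBot (nhds 0) := by
    have key : Tendsto (fun x : ℝ => -x * Real.exp x) atBot (nhds 0) := by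
      have h := (Real.tendsto_pow_mul_exp_neg_atTop_nhds_zero 1).comp tendsto_neg_atBot_atTop
      exact h.congr fun x => by simp [Function.comp]
    apply squeeze_zero_norm' _ key
    filter_upwards [hev, eventually_le_atBot (0:ℝ)] with x hx hx0
    rw [Real.norm_eq_abs, abs_mul, Real.abs_exp, abs_of_nonpos hx0]
    exact mul_le_mul_of_nonneg_left (Real.exp_le_exp.2 hx) (by linarith)
  -- per-term limits
  have hexpj : ∀ j : Fin p, Tendsto (fun x : ℝ => Real.exp (α * x * (xs j - M)))
      atBot (nhds (if xs j = M then 1 else 0)) := by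
    intro j
    by_cases h : xs j = M
    · simp [h]
    · have hlt : xs j - M < 0 := sub_neg.2 (lt_of_le_of_ne (Finset.le_sup' xs (Finset.mem_univ j)) h)
      have h1 : Tendsto (fun x : ℝ => α * x * (xs j - M)) atBot atBot := by
        have heq : (fun x : ℝ => α * x * (xs j - M)) = fun x => (α * (xs j - M)) * x := by
          funext x; ring
        rw [heq]
        exact Tendsto.const_mul_atBot (mul_pos_of_neg_of_neg hα hlt) tendsto_id
      rw [if_neg h]
      exact Real.tendsto_exp_atBot.comp h1
  have hDlim : Tendsto Df atBot (nhds L) := by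
    have := hqexp.add (tendsto_finset_sum Finset.univ (fun j _ => hexpj j))
    simpa [hDf, hL] using this
  have hNlim : Tendsto Nf atBot (nhds (M * L)) := by
    have hs : Tendsto (fun x : ℝ => ∑ j, xs j * Real.exp (α * x * (xs j - M))) atBot
        (nhds (∑ j, xs j * (if xs j = M then (1:ℝ) else 0))) :=
      tendsto_finset_sum Finset.univ (fun j _ => (tendsto_const_nhds).mul (hexpj j))
    have heq : (∑ j, xs j * (if xs j = M then (1:ℝ) else 0)) = M * L := by
      rw [hL, Finset.mul_sum]
      apply Finset.sum_congr rfl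
      intro j _
      split_ifs with h <;> simp [h]
    have := hs.add hxq
    rw [heq] at this
    simpa [hNf] using this
  -- rewrite attnOut as Nf / Df
  have hfun : ∀ x : ℝ, attnOut p xs α x = Nf x / Df x := by
    intro x
    have hE : Real.exp (α * x * M) ≠ 0 := (Real.exp_pos _).ne'
    have key : ∀ c : ℝ, Real.exp (α * x * (c - M)) * Real.exp (α * x * M) = Real.exp (α * x * c) := by
      intro c; rw [← Real.exp_add]; ring_nf
    have hNE : Nf x * Real.exp (α * x * M)
        = ∑ j, xs j * Real.exp (α * x * xs j) + x * Real.exp (α * x ^ 2) := by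
      rw [hNf]
      simp only [add_mul, Finset.sum_mul]
      congr 1
      · exact Finset.sum_congr rfl fun j _ => by rw [mul_assoc, key]
      · rw [mul_assoc, key x]; ring_nf
    have hDE : Df x * Real.exp (α * x * M) = attnDenom p xs α x := by
      rw [hDf, attnDenom]
      simp only [add_mul, Finset.sum_mul, key]
      ring_nf
    rw [attnOut, ← hNE, ← hDE, mul_div_mul_right _ _ hE]
  have hfinal := hNlim.div hDlim hLpos.ne'
  rw [mul_div_assoc, div_self hLpos.ne', mul_one] at hfinal
  exact hfinal.congr (fun x => (hfun x).symm)
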